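/- Let H be a complex Hilbert space, let δ > 0, and let A₁ and A₂ be nonzero norm-closed C*-subalgebras of B(H) with d_KK(A₁, A₂) < δ/4. Then there exists a map φ : A₁ → A₂ which is a δ-*-isomorphism and which moreover satisfies ‖φ(x)‖ = ‖x‖ and ‖φ(x) − x‖ ≤ (δ/4)·‖x‖ for every x ∈ A₁. -/

import Mathlib

/-- `φ : A → B` (not assumed linear or continuous) is an `ε`-*-homomorphism. -/
def IsApproxStarHom {A B : Type*}
    [NonUnitalNormedRing A] [StarRing A] [Module ℂ A]
    [NonUnitalNormedRing B] [StarRing B] [Module ℂ B]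
    (ε : ℝ) (φ : A → B) : Prop :=
  (∀ x y : A, ‖x‖ ≤ 1 → ‖y‖ ≤ 1 → ‖φ (x + y) - φ x - φ y‖ ≤ ε) ∧
  (∀ (x : A) (l : ℂ), ‖x‖ ≤ 1 → ‖l‖ ≤ 1 → ‖φ (l • x) - l • φ x‖ ≤ ε) ∧
  (∀ x y : A, ‖x‖ ≤ 1 → ‖y‖ ≤ 1 → ‖φ (x * y) - φ x * φ y‖ ≤ ε) ∧
  (∀ x : A, ‖x‖ ≤ 1 → ‖φ (star x) - star (φ x)‖ ≤ ε) ∧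
  (∀ x : A, ‖x‖ ≤ 1 → ‖φ x‖ ≤ 1 + ε)

/-- An `ε`-*-isomorphism: an `ε`-isometric, `ε`-surjective `ε`-*-homomorphism. -/
def IsApproxStarIso {A B : Type*}
    [NonUnitalNormedRing A] [StarRing A] [Module ℂ A]
    [NonUnitalNormedRing B] [StarRing B] [Module ℂ B]
    (ε : ℝ) (φ : A → B) : Prop :=
  IsApproxStarHom ε φ ∧
  (∀ x : A, ‖x‖ = 1 → ‖φ x‖ ∈ Set.Icc (1 - ε) (1 + ε)) ∧
  (∀ b : B, ‖b‖ ≤ 1 → ∃ a : A, ‖φ a - b‖ ≤ ε)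


/-- The Kadison–Kastler distance between two subsets of `B(H)`. -/
noncomputable def dKK {H : Type*} [NormedAddCommGroup H] [InnerProductSpace ℂ H]
    [CompleteSpace H] (A B : Set (H →L[ℂ] H)) : ℝ :=
  max
    (⨆ x : {x : H →L[ℂ] H // x ∈ A ∧ ‖x‖ = 1},
      ⨅ y : {y : H →L[ℂ] H // y ∈ B ∧ ‖y‖ = 1}, ‖(x : H →L[ℂ] H) - (y : H →L[ℂ] H)‖)
    (⨆ y : {y : H →L[ℂ] H // y ∈ B ∧ ‖y‖ = 1},
      ⨅ x : {x : H →L[ℂ] H // x ∈ A ∧ ‖x‖ = 1}, ‖(x : H →L[ℂ] H) - (y : H →L[ℂ] H)‖)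

universe u

set_option maxHeartbeats 2000000
/-- If two nonzero norm-closed C*-subalgebras of `B(H)` are at Kadison–Kastler
distance less than `δ/4`, then there is a `δ`-*-isomorphism `φ : A₁ → A₂` with
`‖φ(x)‖ = ‖x‖` and `‖φ(x) - x‖ ≤ (δ/4)‖x‖` for all `x ∈ A₁`. -/
theorem close_subalgebras_approx_iso {H : Type u}
    [NormedAddCommGroup H] [InnerProductSpace ℂ H] [CompleteSpace H]
    (δ : ℝ) (hδ : 0 < δ) (A₁ A₂ : StarSubalgebra ℂ (H →L[ℂ] H))
    (h₁ : IsClosed (A₁ : Set (H →L[ℂ] H))) (h₂ : IsClosed (A₂ : Set (H →L[ℂ] H)))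
    (hne₁ : ∃ x ∈ A₁, x ≠ 0) (hne₂ : ∃ x ∈ A₂, x ≠ 0)
    (hKK : dKK (A₁ : Set (H →L[ℂ] H)) (A₂ : Set (H →L[ℂ] H)) < δ / 4) :
    ∃ φ : A₁ → A₂, IsApproxStarIso δ φ ∧
      ∀ x : A₁, ‖(φ x : H →L[ℂ] H)‖ = ‖(x : H →L[ℂ] H)‖ ∧
        ‖(φ x : H →L[ℂ] H) - (x : H →L[ℂ] H)‖ ≤ (δ / 4) * ‖(x : H →L[ℂ] H)‖ := by
  classical
  set q := δ / 4 with hqdef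
  have hq : 0 < q := by positivity
  -- nonempty unit spheres
  have mkunit : ∀ (A : StarSubalgebra ℂ (H →L[ℂ] H)) (x : H →L[ℂ] H), x ∈ A → x ≠ 0 →
      ((‖x‖⁻¹ : ℂ) • x) ∈ A ∧ ‖(‖x‖⁻¹ : ℂ) • x‖ = 1 := by
    intro A x hxA hx
    have hn : ‖x‖ ≠ 0 := norm_ne_zero_iff.mpr hx
    refine ⟨SMulMemClass.smul_mem _ hxA, ?_⟩
    rw [norm_smul]
    simp only [norm_inv, Complex.norm_real, Real.norm_eq_abs, abs_of_nonneg (norm_nonneg x)]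
    field_simp
  obtain ⟨x₀, hx₀A, hx₀⟩ := hne₁
  obtain ⟨y₀, hy₀A, hy₀⟩ := hne₂
  haveI hne₁' : Nonempty {x : H →L[ℂ] H // x ∈ (A₁ : Set (H →L[ℂ] H)) ∧ ‖x‖ = 1} :=
    ⟨⟨_, (mkunit A₁ x₀ hx₀A hx₀).1, (mkunit A₁ x₀ hx₀A hx₀).2⟩⟩
  haveI hne₂' : Nonempty {y : H →L[ℂ] H // y ∈ (A₂ : Set (H →L[ℂ] H)) ∧ ‖y‖ = 1} :=
    ⟨⟨_, (mkunit A₂ y₀ hy₀A hy₀).1, (mkunit A₂ y₀ hy₀A hy₀).2⟩⟩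
  have hbddB : ∀ (x : H →L[ℂ] H),
      BddBelow (Set.range fun y : {y : H →L[ℂ] H // y ∈ (A₂ : Set (H →L[ℂ] H)) ∧ ‖y‖ = 1} =>
        ‖x - (y : H →L[ℂ] H)‖) := by
    intro x; exact ⟨0, by rintro _ ⟨y, rfl⟩; positivity⟩
  have hbddB' : ∀ (y : H →L[ℂ] H),
      BddBelow (Set.range fun x : {x : H →L[ℂ] H // x ∈ (A₁ : Set (H →L[ℂ] H)) ∧ ‖x‖ = 1} =>
        ‖(x : H →L[ℂ] H) - y‖) := by
    intro y; exact ⟨0, by rintro _ ⟨x, rfl⟩; positivity⟩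
  -- close element in A₂
  have close1 : ∀ x : H →L[ℂ] H, x ∈ A₁ → ‖x‖ = 1 →
      ∃ y : H →L[ℂ] H, y ∈ A₂ ∧ ‖y‖ = 1 ∧ ‖x - y‖ < q := by
    intro x hxA hx1
    have hsup : (⨆ x : {x : H →L[ℂ] H // x ∈ (A₁ : Set (H →L[ℂ] H)) ∧ ‖x‖ = 1},
        ⨅ y : {y : H →L[ℂ] H // y ∈ (A₂ : Set (H →L[ℂ] H)) ∧ ‖y‖ = 1},
          ‖(x : H →L[ℂ] H) - (y : H →L[ℂ] H)‖) < q :=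
      lt_of_le_of_lt (le_max_left _ _) hKK
    have hbddA : BddAbove (Set.range fun x : {x : H →L[ℂ] H // x ∈ (A₁ : Set (H →L[ℂ] H)) ∧ ‖x‖ = 1} =>
        ⨅ y : {y : H →L[ℂ] H // y ∈ (A₂ : Set (H →L[ℂ] H)) ∧ ‖y‖ = 1},
          ‖(x : H →L[ℂ] H) - (y : H →L[ℂ] H)‖) := by
      refine ⟨2, ?_⟩
      rintro _ ⟨xi, rfl⟩
      obtain ⟨yi⟩ := hne₂'
      refine le_trans (ciInf_le (hbddB _) yi) ?_
      calc ‖(xi : H →L[ℂ] H) - (yi : H →L[ℂ] H)‖ ≤ ‖(xi : H →L[ℂ] H)‖ + ‖(yi : H →L[ℂ] H)‖ :=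
        norm_sub_le _ _
      _ ≤ 2 := by rw [xi.2.2, yi.2.2]; norm_num
    have h1 : (⨅ y : {y : H →L[ℂ] H // y ∈ (A₂ : Set (H →L[ℂ] H)) ∧ ‖y‖ = 1},
        ‖x - (y : H →L[ℂ] H)‖) < q :=
      lt_of_le_of_lt (le_ciSup hbddA ⟨x, hxA, hx1⟩) hsup
    obtain ⟨y, hy⟩ := exists_lt_of_ciInf_lt h1
    exact ⟨y, y.2.1, y.2.2, hy⟩
  have close2 : ∀ y : H →L[ℂ] H, y ∈ A₂ → ‖y‖ = 1 →
      ∃ x : H →L[ℂ] H, x ∈ A₁ ∧ ‖x‖ = 1 ∧ ‖x - y‖ < q := by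
    intro y hyA hy1
    have hsup : (⨆ y : {y : H →L[ℂ] H // y ∈ (A₂ : Set (H →L[ℂ] H)) ∧ ‖y‖ = 1},
        ⨅ x : {x : H →L[ℂ] H // x ∈ (A₁ : Set (H →L[ℂ] H)) ∧ ‖x‖ = 1},
          ‖(x : H →L[ℂ] H) - (y : H →L[ℂ] H)‖) < q :=
      lt_of_le_of_lt (le_max_right _ _) hKK
    have hbddA : BddAbove (Set.range fun y : {y : H →L[ℂ] H // y ∈ (A₂ : Set (H →L[ℂ] H)) ∧ ‖y‖ = 1} =>
        ⨅ x : {x : H →L[ℂ] H // x ∈ (A₁ : Set (H →L[ℂ] H)) ∧ ‖x‖ = 1},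
          ‖(x : H →L[ℂ] H) - (y : H →L[ℂ] H)‖) := by
      refine ⟨2, ?_⟩
      rintro _ ⟨yi, rfl⟩
      obtain ⟨xi⟩ := hne₁'
      refine le_trans (ciInf_le (hbddB' _) xi) ?_
      calc ‖(xi : H →L[ℂ] H) - (yi : H →L[ℂ] H)‖ ≤ ‖(xi : H →L[ℂ] H)‖ + ‖(yi : H →L[ℂ] H)‖ :=
        norm_sub_le _ _
      _ ≤ 2 := by rw [xi.2.2, yi.2.2]; norm_num
    have h1 : (⨅ x : {x : H →L[ℂ] H // x ∈ (A₁ : Set (H →L[ℂ] H)) ∧ ‖x‖ = 1},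
        ‖(x : H →L[ℂ] H) - y‖) < q :=
      lt_of_le_of_lt (le_ciSup hbddA ⟨y, hyA, hy1⟩) hsup
    obtain ⟨x, hx⟩ := exists_lt_of_ciInf_lt h1
    exact ⟨x, x.2.1, x.2.2, hx⟩
  -- key existence
  have key : ∀ x : A₁, ∃ y : A₂, ‖(y : H →L[ℂ] H)‖ = ‖(x : H →L[ℂ] H)‖ ∧
      ‖(y : H →L[ℂ] H) - (x : H →L[ℂ] H)‖ ≤ q * ‖(x : H →L[ℂ] H)‖ := by
    intro x
    rcases eq_or_ne (x : H →L[ℂ] H) 0 with h0 | h0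
    · exact ⟨0, by simp [h0], by simp [h0]⟩
    · have hn : ‖(x : H →L[ℂ] H)‖ ≠ 0 := norm_ne_zero_iff.mpr h0
      obtain ⟨hm, hn1⟩ := mkunit A₁ (x : H →L[ℂ] H) x.2 h0
      obtain ⟨m, hmA, hm1, hclose⟩ := close1 _ hm hn1
      refine ⟨⟨(‖(x : H →L[ℂ] H)‖ : ℂ) • m, SMulMemClass.smul_mem _ hmA⟩, ?_, ?_⟩
      · rw [norm_smul, hm1]
        simp [abs_of_nonneg (norm_nonneg (x : H →L[ℂ] H))]
      · have hx : ((‖(x : H →L[ℂ] H)‖ : ℂ)) • ((‖(x : H →L[ℂ] H)‖⁻¹ : ℂ) • (x : H →L[ℂ] H))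
            = (x : H →L[ℂ] H) := by
          rw [smul_smul]
          rw [show ((‖(x : H →L[ℂ] H)‖ : ℂ)) * ((‖(x : H →L[ℂ] H)‖⁻¹ : ℂ)) = 1 from
            mul_inv_cancel₀ (by exact_mod_cast hn)]
          simp
        calc ‖(‖(x : H →L[ℂ] H)‖ : ℂ) • m - (x : H →L[ℂ] H)‖
            = ‖(‖(x : H →L[ℂ] H)‖ : ℂ) • (m - (‖(x : H →L[ℂ] H)‖⁻¹ : ℂ) • (x : H →L[ℂ] H))‖ := by
              rw [smul_sub, hx]
          _ = ‖(x : H →L[ℂ] H)‖ * ‖(‖(x : H →L[ℂ] H)‖⁻¹ : ℂ) • (x : H →L[ℂ] H) - m‖ := by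
              rw [norm_smul, norm_sub_rev]
              simp [abs_of_nonneg (norm_nonneg (x : H →L[ℂ] H))]
          _ ≤ ‖(x : H →L[ℂ] H)‖ * q := by
              exact mul_le_mul_of_nonneg_left (le_of_lt hclose) (norm_nonneg _)
          _ = q * ‖(x : H →L[ℂ] H)‖ := mul_comm _ _
  choose φ hφnorm hφclose using key
  -- main pointwise facts, in subtype norms
  have hnormA : ∀ x : A₁, ‖x‖ = ‖(x : H →L[ℂ] H)‖ := fun _ => rfl
  have hN : ∀ x : A₁, ‖φ x‖ = ‖x‖ := fun x => hφnorm x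
  have hC : ∀ x : A₁, ‖((φ x : A₂) : H →L[ℂ] H) - (x : H →L[ℂ] H)‖ ≤ q * ‖(x : H →L[ℂ] H)‖ :=
    fun x => hφclose x
  have tri3 : ∀ a b c : H →L[ℂ] H, ‖a - b - c‖ ≤ ‖a‖ + ‖b‖ + ‖c‖ := by
    intro a b c
    calc ‖a - b - c‖ ≤ ‖a - b‖ + ‖c‖ := norm_sub_le _ _
      _ ≤ ‖a‖ + ‖b‖ + ‖c‖ := add_le_add (norm_sub_le _ _) le_rfl
  refine ⟨φ, ⟨⟨?_, ?_, ?_, ?_, ?_⟩, ?_, ?_⟩, fun x => ⟨hφnorm x, hC x⟩⟩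
  · -- additivity
    intro x y hx hy
    replace hx : ‖(x : H →L[ℂ] H)‖ ≤ 1 := hx
    replace hy : ‖(y : H →L[ℂ] H)‖ ≤ 1 := hy
    show ‖((φ (x + y) - φ x - φ y : A₂) : H →L[ℂ] H)‖ ≤ δ
    have hco : ((φ (x + y) - φ x - φ y : A₂) : H →L[ℂ] H)
        = (((φ (x + y) : A₂) : H →L[ℂ] H) - (((x + y : A₁)) : H →L[ℂ] H))
          - (((φ x : A₂) : H →L[ℂ] H) - (x : H →L[ℂ] H))
          - (((φ y : A₂) : H →L[ℂ] H) - (y : H →L[ℂ] H)) := by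
      push_cast; abel
    rw [hco]
    have ha := hC (x + y)
    have hb := hC x
    have hc := hC y
    have hxy : ‖((x + y : A₁) : H →L[ℂ] H)‖ ≤ ‖(x : H →L[ℂ] H)‖ + ‖(y : H →L[ℂ] H)‖ := by
      push_cast; exact norm_add_le _ _
    refine le_trans (tri3 _ _ _) ?_
    have hxn := norm_nonneg (x : H →L[ℂ] H)
    have hyn := norm_nonneg (y : H →L[ℂ] H)
    nlinarith [hC (x + y), hC x, hC y]
  · -- scalar
    intro x l hx hl
    replace hx : ‖(x : H →L[ℂ] H)‖ ≤ 1 := hx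
    show ‖((φ (l • x) - l • φ x : A₂) : H →L[ℂ] H)‖ ≤ δ
    have hco : ((φ (l • x) - l • φ x : A₂) : H →L[ℂ] H)
        = (((φ (l • x) : A₂) : H →L[ℂ] H) - ((l • x : A₁) : H →L[ℂ] H))
          - l • (((φ x : A₂) : H →L[ℂ] H) - (x : H →L[ℂ] H)) := by
      push_cast
      rw [smul_sub]
      abel
    rw [hco]
    have ha := hC (l • x)
    have hb := hC x
    have hlx : ‖((l • x : A₁) : H →L[ℂ] H)‖ = ‖l‖ * ‖(x : H →L[ℂ] H)‖ := by
      push_cast; exact norm_smul _ _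
    refine le_trans (norm_sub_le _ _) ?_
    rw [norm_smul]
    have hln := norm_nonneg l
    have hxn := norm_nonneg (x : H →L[ℂ] H)
    have hlx1 : ‖l‖ * ‖(x : H →L[ℂ] H)‖ ≤ 1 := by nlinarith
    have h1 : ‖((φ (l • x) : A₂) : H →L[ℂ] H) - ((l • x : A₁) : H →L[ℂ] H)‖ ≤ q := by
      rw [hlx] at ha
      nlinarith [ha, mul_le_mul_of_nonneg_left hlx1 hq.le]
    have h2 : ‖l‖ * ‖((φ x : A₂) : H →L[ℂ] H) - (x : H →L[ℂ] H)‖ ≤ q := by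
      calc ‖l‖ * ‖((φ x : A₂) : H →L[ℂ] H) - (x : H →L[ℂ] H)‖
          ≤ 1 * (q * ‖(x : H →L[ℂ] H)‖) := mul_le_mul hl hb (norm_nonneg _) zero_le_one
        _ = q * ‖(x : H →L[ℂ] H)‖ := one_mul _
        _ ≤ q := by nlinarith
    linarith
  · -- multiplicativity
    intro x y hx hy
    replace hx : ‖(x : H →L[ℂ] H)‖ ≤ 1 := hx
    replace hy : ‖(y : H →L[ℂ] H)‖ ≤ 1 := hy
    show ‖((φ (x * y) - φ x * φ y : A₂) : H →L[ℂ] H)‖ ≤ δ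
    have hco : ((φ (x * y) - φ x * φ y : A₂) : H →L[ℂ] H)
        = (((φ (x * y) : A₂) : H →L[ℂ] H) - ((x * y : A₁) : H →L[ℂ] H))
          - ((((φ x : A₂) : H →L[ℂ] H) - (x : H →L[ℂ] H)) * (y : H →L[ℂ] H))
          - (((φ x : A₂) : H →L[ℂ] H) * (((φ y : A₂) : H →L[ℂ] H) - (y : H →L[ℂ] H))) := by
      push_cast
      rw [sub_mul, mul_sub]
      abel
    rw [hco]
    have ha := hC (x * y)
    have hb := hC x
    have hc := hC y
    have hxy : ‖((x * y : A₁) : H →L[ℂ] H)‖ ≤ ‖(x : H →L[ℂ] H)‖ * ‖(y : H →L[ℂ] H)‖ := by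
      push_cast; exact norm_mul_le _ _
    have hphix : ‖((φ x : A₂) : H →L[ℂ] H)‖ = ‖(x : H →L[ℂ] H)‖ := hφnorm x
    refine le_trans (tri3 _ _ _) ?_
    have h1 : ‖(((φ x : A₂) : H →L[ℂ] H) - (x : H →L[ℂ] H)) * (y : H →L[ℂ] H)‖
        ≤ (q * ‖(x : H →L[ℂ] H)‖) * ‖(y : H →L[ℂ] H)‖ :=
      le_trans (norm_mul_le _ _) (mul_le_mul_of_nonneg_right hb (norm_nonneg _))
    have h2 : ‖((φ x : A₂) : H →L[ℂ] H) * (((φ y : A₂) : H →L[ℂ] H) - (y : H →L[ℂ] H))‖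
        ≤ ‖(x : H →L[ℂ] H)‖ * (q * ‖(y : H →L[ℂ] H)‖) := by
      refine le_trans (norm_mul_le _ _) ?_
      rw [hphix]
      exact mul_le_mul_of_nonneg_left hc (norm_nonneg _)
    have hxn := norm_nonneg (x : H →L[ℂ] H)
    have hyn := norm_nonneg (y : H →L[ℂ] H)
    have hxy1 : ‖(x : H →L[ℂ] H)‖ * ‖(y : H →L[ℂ] H)‖ ≤ 1 := by nlinarith
    have h0 : ‖((φ (x * y) : A₂) : H →L[ℂ] H) - ((x * y : A₁) : H →L[ℂ] H)‖ ≤ q := by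
      refine le_trans ha ?_
      nlinarith [mul_le_mul_of_nonneg_left hxy1 hq.le]
    have h1' : ‖(((φ x : A₂) : H →L[ℂ] H) - (x : H →L[ℂ] H)) * (y : H →L[ℂ] H)‖ ≤ q := by
      refine le_trans h1 ?_
      nlinarith [mul_le_mul_of_nonneg_left hxy1 hq.le]
    have h2' : ‖((φ x : A₂) : H →L[ℂ] H) * (((φ y : A₂) : H →L[ℂ] H) - (y : H →L[ℂ] H))‖ ≤ q := by
      refine le_trans h2 ?_
      nlinarith [mul_le_mul_of_nonneg_left hxy1 hq.le]
    linarith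
  · -- star
    intro x hx
    replace hx : ‖(x : H →L[ℂ] H)‖ ≤ 1 := hx
    show ‖((φ (star x) - star (φ x) : A₂) : H →L[ℂ] H)‖ ≤ δ
    have hco : ((φ (star x) - star (φ x) : A₂) : H →L[ℂ] H)
        = (((φ (star x) : A₂) : H →L[ℂ] H) - ((star x : A₁) : H →L[ℂ] H))
          - star (((φ x : A₂) : H →L[ℂ] H) - (x : H →L[ℂ] H)) := by
      push_cast
      simp only [StarMemClass.coe_star]
      rw [star_sub]
      abel
    rw [hco]
    have ha := hC (star x)
    have hb := hC x
    have hsx : ‖((star x : A₁) : H →L[ℂ] H)‖ = ‖(x : H →L[ℂ] H)‖ := by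
      rw [StarMemClass.coe_star]; exact norm_star _
    refine le_trans (norm_sub_le _ _) ?_
    rw [norm_star]
    rw [hsx] at ha
    have hxn := norm_nonneg (x : H →L[ℂ] H)
    have : q * ‖(x : H →L[ℂ] H)‖ ≤ q := by nlinarith
    linarith
  · -- norm bound
    intro x hx
    replace hx : ‖(x : H →L[ℂ] H)‖ ≤ 1 := hx
    show ‖((φ x : A₂) : H →L[ℂ] H)‖ ≤ 1 + δ
    rw [hφnorm x]
    linarith
  · -- approx isometric
    intro x hx1
    replace hx1 : ‖(x : H →L[ℂ] H)‖ = 1 := hx1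
    show ‖((φ x : A₂) : H →L[ℂ] H)‖ ∈ Set.Icc (1 - δ) (1 + δ)
    rw [hφnorm x, hx1]
    constructor <;> linarith
  · -- approx surjective
    intro b hb
    replace hb : ‖(b : H →L[ℂ] H)‖ ≤ 1 := hb
    rcases eq_or_ne (b : H →L[ℂ] H) 0 with h0 | h0
    · refine ⟨0, ?_⟩
      have hb0 : b = 0 := Subtype.ext h0
      show ‖((φ 0 - b : A₂) : H →L[ℂ] H)‖ ≤ δ
      rw [hb0]
      have : ‖((φ 0 : A₂) : H →L[ℂ] H)‖ = ‖((0 : A₁) : H →L[ℂ] H)‖ := hφnorm 0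
      simp only [sub_zero]
      simp only [ZeroMemClass.coe_zero, norm_zero] at this
      rw [this]
      linarith
    · have hbn : ‖(b : H →L[ℂ] H)‖ ≠ 0 := norm_ne_zero_iff.mpr h0
      obtain ⟨hu, hu1⟩ := mkunit A₂ (b : H →L[ℂ] H) b.2 h0
      obtain ⟨aE, haA, ha1, hclose⟩ := close2 _ hu hu1
      set a : A₁ := ⟨(‖(b : H →L[ℂ] H)‖ : ℂ) • aE, SMulMemClass.smul_mem _ haA⟩ with hadef
      refine ⟨a, ?_⟩
      show ‖((φ a - b : A₂) : H →L[ℂ] H)‖ ≤ δ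
      have han : ‖(a : H →L[ℂ] H)‖ = ‖(b : H →L[ℂ] H)‖ := by
        rw [show (a : H →L[ℂ] H) = (‖(b : H →L[ℂ] H)‖ : ℂ) • aE from rfl]
        rw [norm_smul, ha1]
        simp [abs_of_nonneg (norm_nonneg (b : H →L[ℂ] H))]
      have hab : ‖(a : H →L[ℂ] H) - (b : H →L[ℂ] H)‖ ≤ ‖(b : H →L[ℂ] H)‖ * q := by
        have hbu : ((‖(b : H →L[ℂ] H)‖ : ℂ)) • ((‖(b : H →L[ℂ] H)‖⁻¹ : ℂ) • (b : H →L[ℂ] H))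
            = (b : H →L[ℂ] H) := by
          rw [smul_smul, show ((‖(b : H →L[ℂ] H)‖ : ℂ)) * ((‖(b : H →L[ℂ] H)‖⁻¹ : ℂ)) = 1 from
            mul_inv_cancel₀ (by exact_mod_cast hbn)]
          simp
        have hacoe : (a : H →L[ℂ] H) = (‖(b : H →L[ℂ] H)‖ : ℂ) • aE := rfl
        have hk : (a : H →L[ℂ] H) - (b : H →L[ℂ] H)
            = (‖(b : H →L[ℂ] H)‖ : ℂ) • (aE - (‖(b : H →L[ℂ] H)‖⁻¹ : ℂ) • (b : H →L[ℂ] H)) := by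
          rw [hacoe, smul_sub, hbu]
        rw [hk, norm_smul]
        simp only [Complex.norm_real, Real.norm_eq_abs, abs_of_nonneg (norm_nonneg (b : H →L[ℂ] H))]
        exact mul_le_mul_of_nonneg_left (le_of_lt hclose) (norm_nonneg _)
      have hφa := hC a
      rw [han] at hφa
      have hco : ((φ a - b : A₂) : H →L[ℂ] H)
          = (((φ a : A₂) : H →L[ℂ] H) - (a : H →L[ℂ] H))
            + ((a : H →L[ℂ] H) - (b : H →L[ℂ] H)) := by
        push_cast; abel
      rw [hco]
      refine le_trans (norm_add_le _ _) ?_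
      nlinarith [hφa, hab, norm_nonneg (b : H →L[ℂ] H)]
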